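/- Let d ≥ 1 and L ≥ 1 be integers. Let χ : ℝ^d → ℝ be measurable with ∫_{ℝ^d} (1 + |h|)^L |χ(h)| dh < ∞, ∫_{ℝ^d} χ(h) dh = 1, and ∫_{ℝ^d} h^a χ(h) dh = 0 for every multi-index a with 1 ≤ |a| ≤ L − 1. Then for every bounded function F : ℝ^d → ℝ of class C^L with bounded derivatives up to order L, sup_{x ∈ ℝ^d} | (χ ∗ F)(x) − F(x) | ≤ (1/L!) · ( sup_x ‖D^L F(x)‖ ) · ∫_{ℝ^d} |h|^L |χ(h)| dh, where D^L F denotes the L-th (Fréchet) derivative of F and ‖·‖ its operator norm. -/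

import Mathlib

open MeasureTheory

section AuxMollification

lemma aux_within_moll {g : ℝ → ℝ} {N : ℕ∞} (hg : ContDiff ℝ N g) {k : ℕ} (hk : (k : ℕ∞) ≤ N)
    {y : ℝ} (hy : y ∈ Set.Icc (0:ℝ) 1) :
    iteratedDerivWithin k g (Set.Icc 0 1) y = iteratedDeriv k g y := by
  rw [iteratedDerivWithin_eq_iteratedFDerivWithin, iteratedDeriv_eq_iteratedFDeriv]
  congr 1
  have h := (contDiff_iff_ftaylorSeries.mp hg).hasFTaylorSeriesUpToOn (Set.Icc (0:ℝ) 1)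
  have h2 := h.eq_iteratedFDerivWithin_of_uniqueDiffOn (by exact_mod_cast hk)
    (uniqueDiffOn_Icc one_pos) hy
  rw [← h2]
  rfl

lemma aux_iteratedDeriv_moll {d : ℕ} {N : ℕ∞} {F : (Fin d → ℝ) → ℝ} (hF : ContDiff ℝ N F)
    (x v : Fin d → ℝ) :
    ∀ k : ℕ, (k : ℕ∞) ≤ N → ∀ t : ℝ,
      iteratedDeriv k (fun s : ℝ => F (x + s • v)) t
        = iteratedFDeriv ℝ k F (x + t • v) (fun _ => v) := by
  intro k
  induction k with
  | zero => intro _ t; simp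
  | succ k IH =>
    intro hk t
    have hk' : (k : ℕ∞) ≤ N :=
      le_trans (by exact_mod_cast Nat.cast_le.2 k.le_succ) hk
    rw [iteratedDeriv_succ]
    have heq : iteratedDeriv k (fun s : ℝ => F (x + s • v)) = fun s : ℝ =>
        iteratedFDeriv ℝ k F (x + s • v) (fun _ => v) := funext (IH hk')
    rw [heq]
    have hφ : HasDerivAt (fun s : ℝ => x + s • v) v t := by
      simpa using ((hasDerivAt_id t).smul_const v).const_add x
    have hdiff : Differentiable ℝ (iteratedFDeriv ℝ k F) := by
      refine (hF.iteratedFDeriv_right (m := 1) ?_).differentiable one_ne_zero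
      have hk2 : ((k + 1 : ℕ) : WithTop ℕ∞) ≤ (N : WithTop ℕ∞) := by exact_mod_cast hk
      calc (1 + (k : ℕ) : WithTop ℕ∞) = ((k + 1 : ℕ) : WithTop ℕ∞) := by push_cast; ring
        _ ≤ (N : WithTop ℕ∞) := hk2
    have h2 : HasDerivAt (fun s : ℝ => iteratedFDeriv ℝ k F (x + s • v))
        (fderiv ℝ (iteratedFDeriv ℝ k F) (x + t • v) v) t :=
      (hdiff _).hasFDerivAt.comp_hasDerivAt t hφ
    have h3 := ((ContinuousMultilinearMap.apply ℝ (fun _ : Fin k => (Fin d → ℝ)) ℝ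
        (fun _ => v)).hasFDerivAt.comp_hasDerivAt t h2)
    have h3' : HasDerivAt (fun s : ℝ => iteratedFDeriv ℝ k F (x + s • v) (fun _ => v))
        (fderiv ℝ (iteratedFDeriv ℝ k F) (x + t • v) v (fun _ => v)) t := h3
    rw [h3'.deriv]
    rw [iteratedFDeriv_succ_apply_left]
    rfl

lemma aux_taylor_moll {d L : ℕ} (hL : 1 ≤ L) {F : (Fin d → ℝ) → ℝ}
    (hF : ContDiff ℝ (L : ℕ∞) F)
    {M : ℝ} (hM : ∀ y, ‖iteratedFDeriv ℝ L F y‖ ≤ M) (x v : Fin d → ℝ) :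
    |F (x + v) - ∑ k ∈ Finset.range L,
        ((k.factorial : ℝ))⁻¹ * iteratedFDeriv ℝ k F x (fun _ => v)|
      ≤ M * ‖v‖ ^ L / (L.factorial : ℝ) := by
  obtain ⟨n, rfl⟩ : ∃ n, L = n + 1 := ⟨L - 1, (Nat.succ_pred_eq_of_pos hL).symm⟩
  set g : ℝ → ℝ := fun s => F (x + s • v) with hgdef
  have hg : ContDiff ℝ ((n + 1 : ℕ) : ℕ∞) g := by
    apply hF.comp
    exact contDiff_const.add (contDiff_id.smul contDiff_const)
  have hkey : ∀ k : ℕ, k ≤ n + 1 → ∀ t : ℝ,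
      iteratedDeriv k g t = iteratedFDeriv ℝ k F (x + t • v) (fun _ => v) :=
    fun k hk t => aux_iteratedDeriv_moll hF x v k (by exact_mod_cast hk) t
  have hdiffn : Differentiable ℝ (iteratedDeriv n g) := by
    rw [iteratedDeriv_eq_equiv_comp]
    apply Differentiable.comp
    · exact (LinearIsometryEquiv.symm _).differentiable
    · refine (hg.iteratedFDeriv_right (m := 1) ?_).differentiable one_ne_zero
      have : (1 + (n : ℕ) : WithTop ℕ∞) = ((n + 1 : ℕ) : WithTop ℕ∞) := by push_cast; ring
      rw [this]
      exact_mod_cast le_rfl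
  have hf' : DifferentiableOn ℝ (iteratedDerivWithin n g (Set.Icc 0 1)) (Set.Ioo 0 1) := by
    apply (hdiffn.differentiableOn).congr
    intro y hy
    exact aux_within_moll hg (by exact_mod_cast Nat.le_succ n) (Set.Ioo_subset_Icc_self hy)
  obtain ⟨x', hx', hlag⟩ := taylor_mean_remainder_lagrange (f := g) (n := n) (x₀ := 0) (x := 1)
    zero_ne_one
    (by rw [Set.uIcc_of_le zero_le_one]; exact (hg.of_le (by exact_mod_cast Nat.le_succ n)).contDiffOn)
    (by rw [Set.uIcc_of_le zero_le_one, Set.uIoo_of_le zero_le_one]; exact hf')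
  rw [Set.uIcc_of_le zero_le_one] at hlag
  rw [Set.uIoo_of_le zero_le_one] at hx'
  have hpoly : taylorWithinEval g n (Set.Icc 0 1) 0 1 = ∑ k ∈ Finset.range (n + 1),
      ((k.factorial : ℝ))⁻¹ * iteratedFDeriv ℝ k F x (fun _ => v) := by
    rw [taylor_within_apply]
    refine Finset.sum_congr rfl fun k hk => ?_
    have hk' : k < n + 1 := Finset.mem_range.mp hk
    rw [aux_within_moll hg (by exact_mod_cast hk'.le) (Set.left_mem_Icc.mpr zero_le_one)]
    rw [hkey k hk'.le 0]
    simp [smul_eq_mul, div_eq_mul_inv, zero_smul]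
  have hg1 : g 1 = F (x + v) := by simp [hgdef]
  have hder : iteratedDerivWithin (n + 1) g (Set.Icc 0 1) x'
      = iteratedFDeriv ℝ (n + 1) F (x + x' • v) (fun _ => v) := by
    rw [aux_within_moll hg le_rfl (Set.Ioo_subset_Icc_self hx'), hkey (n + 1) le_rfl x']
  rw [hg1, hpoly] at hlag
  rw [hlag, hder]
  have hbound : |iteratedFDeriv ℝ (n + 1) F (x + x' • v) (fun _ => v)|
      ≤ M * ‖v‖ ^ (n + 1) := by
    calc |iteratedFDeriv ℝ (n + 1) F (x + x' • v) (fun _ => v)|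
        ≤ ‖iteratedFDeriv ℝ (n + 1) F (x + x' • v)‖ * ∏ _i : Fin (n + 1), ‖v‖ :=
          (iteratedFDeriv ℝ (n + 1) F (x + x' • v)).le_opNorm _
      _ ≤ M * ‖v‖ ^ (n + 1) := by
          rw [Finset.prod_const, Finset.card_univ, Fintype.card_fin]
          gcongr
          exact hM _
  rw [abs_div, abs_mul]
  simp only [sub_zero, one_pow, abs_one, mul_one]
  rw [abs_of_nonneg (by positivity : (0:ℝ) ≤ ((n+1).factorial : ℝ))]
  gcongr ?_ / _

lemma aux_expand_moll {d k : ℕ} (m : ContinuousMultilinearMap ℝ (fun _ : Fin k => (Fin d → ℝ)) ℝ)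
    (w : Fin d → ℝ) :
    m (fun _ => w) = ∑ r : Fin k → Fin d,
      (∏ j, w (r j)) * m (fun j => (Pi.single (r j) 1 : Fin d → ℝ)) := by
  have hw : (fun _ : Fin k => w)
      = fun _ : Fin k => ∑ i : Fin d, w i • (Pi.single i 1 : Fin d → ℝ) := by
    funext j
    rw [← Finset.univ_sum_single w]
    refine Finset.sum_congr rfl fun i _ => ?_
    funext a
    rcases eq_or_ne a i with rfl | hne
    · simp
    · simp [Pi.single_eq_of_ne hne]
  rw [hw, m.map_sum]
  refine Finset.sum_congr rfl fun r _ => ?_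
  rw [m.map_smul_univ]
  simp [smul_eq_mul]

lemma aux_prod_pow_moll {d k : ℕ} (r : Fin k → Fin d) (h : Fin d → ℝ) :
    (∏ j, h (r j)) = ∏ i, h i ^ (Finset.univ.filter (fun j => r j = i)).card := by
  rw [← Finset.prod_fiberwise_of_maps_to (g := r) (fun j _ => Finset.mem_univ (r j))
    (fun j => h (r j))]
  refine Finset.prod_congr rfl fun i _ => ?_
  rw [Finset.prod_congr rfl (fun j hj => by rw [(Finset.mem_filter.mp hj).2])]
  simp [Finset.prod_const]

lemma aux_card_sum_moll {d k : ℕ} (r : Fin k → Fin d) :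
    ∑ i, (Finset.univ.filter (fun j => r j = i)).card = k := by
  rw [← Finset.card_eq_sum_card_fiberwise (fun j _ => Finset.mem_univ (r j))]
  simp

lemma aux_int_poly_moll {d L : ℕ} (χ : (Fin d → ℝ) → ℝ) (hχm : Measurable χ)
    (hχint : Integrable (fun h : Fin d → ℝ => (1 + ‖h‖) ^ L * |χ h|))
    (a : Fin d → ℕ) (ha : ∑ i, a i ≤ L) :
    Integrable (fun h : Fin d → ℝ => (∏ i, h i ^ a i) * χ h) := by
  refine hχint.mono' ?_ (Filter.Eventually.of_forall fun h => ?_)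
  · exact (Continuous.aestronglyMeasurable (by continuity)).mul hχm.aestronglyMeasurable
  · rw [Real.norm_eq_abs, abs_mul]
    have h1 : |∏ i, h i ^ a i| ≤ (1 + ‖h‖) ^ L := by
      rw [Finset.abs_prod]
      calc ∏ i, |h i ^ a i| ≤ ∏ i, (1 + ‖h‖) ^ a i := by
            refine Finset.prod_le_prod (fun i _ => abs_nonneg _) fun i _ => ?_
            rw [abs_pow]
            refine pow_le_pow_left₀ (abs_nonneg _) ?_ _
            calc |h i| ≤ ‖h‖ := by
                  simpa [Real.norm_eq_abs] using norm_le_pi_norm h i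
              _ ≤ 1 + ‖h‖ := by linarith [norm_nonneg h]
        _ = (1 + ‖h‖) ^ (∑ i, a i) := by
            rw [← Finset.prod_pow_eq_pow_sum]
        _ ≤ (1 + ‖h‖) ^ L := by
            apply pow_le_pow_right₀ (by linarith [norm_nonneg h]) ha
    exact mul_le_mul_of_nonneg_right h1 (abs_nonneg _) |>.trans_eq rfl

lemma aux_moment_zero_moll {d L : ℕ} (χ : (Fin d → ℝ) → ℝ) (hχm : Measurable χ)
    (hχint : Integrable (fun h : Fin d → ℝ => (1 + ‖h‖) ^ L * |χ h|))
    (hmom : ∀ a : Fin d → ℕ, 1 ≤ (∑ i, a i) → (∑ i, a i) ≤ L - 1 →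
      (∫ h : Fin d → ℝ, (∏ i, h i ^ a i) * χ h) = 0)
    {k : ℕ} (hk1 : 1 ≤ k) (hk2 : k ≤ L - 1)
    (m : ContinuousMultilinearMap ℝ (fun _ : Fin k => (Fin d → ℝ)) ℝ) :
    (∫ h : Fin d → ℝ, m (fun _ => -h) * χ h) = 0 := by
  have hL : k ≤ L := hk2.trans (Nat.sub_le L 1)
  have hrw : ∀ h : Fin d → ℝ, m (fun _ => -h) * χ h
      = ∑ r : Fin k → Fin d, ((-1:ℝ)^k * m (fun j => (Pi.single (r j) 1 : Fin d → ℝ)))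
          * ((∏ i, h i ^ (Finset.univ.filter (fun j => r j = i)).card) * χ h) := by
    intro h
    rw [aux_expand_moll m (-h), Finset.sum_mul]
    refine Finset.sum_congr rfl fun r _ => ?_
    have : (∏ j, (-h) (r j))
        = (-1:ℝ)^k * ∏ i, h i ^ (Finset.univ.filter (fun j => r j = i)).card := by
      rw [← aux_prod_pow_moll]
      calc (∏ j, (-h) (r j)) = ∏ j, (-1 : ℝ) * h (r j) := by
            refine Finset.prod_congr rfl fun j _ => by simp
        _ = (-1:ℝ)^k * ∏ j, h (r j) := by
            rw [Finset.prod_mul_distrib, Finset.prod_const, Finset.card_univ, Fintype.card_fin]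
    rw [this]; ring
  rw [integral_congr_ae (Filter.Eventually.of_forall hrw)]
  rw [integral_finset_sum]
  · refine Finset.sum_eq_zero fun r _ => ?_
    rw [integral_const_mul, hmom _ ?_ ?_, mul_zero]
    · rw [aux_card_sum_moll r]; exact hk1
    · rw [aux_card_sum_moll r]; exact hk2
  · intro r _
    exact (aux_int_poly_moll χ hχm hχint _ (by rw [aux_card_sum_moll r]; exact hL)).const_mul _

end AuxMollification

/-- Mollification error estimate: if `χ` has integral `1`, finite `L`-th
weighted moment, and vanishing moments of orders `1, …, L−1`, then for every bounded `C^L`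
function `F` with bounded derivatives,
`‖χ ∗ F − F‖_{C⁰} ≤ (1/L!)·sup‖D^L F‖·∫ |h|^L |χ(h)| dh`. -/
theorem mollification_error (d L : ℕ) (hd : 1 ≤ d) (hL : 1 ≤ L)
    (χ : (Fin d → ℝ) → ℝ) (hχm : Measurable χ)
    (hχint : Integrable (fun h : Fin d → ℝ => (1 + ‖h‖) ^ L * |χ h|))
    (hχ1 : (∫ h : Fin d → ℝ, χ h) = 1)
    (hmom : ∀ a : Fin d → ℕ, 1 ≤ (∑ i, a i) → (∑ i, a i) ≤ L - 1 →
      (∫ h : Fin d → ℝ, (∏ i, h i ^ a i) * χ h) = 0)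
    (F : (Fin d → ℝ) → ℝ) (hF : ContDiff ℝ (L : ℕ∞) F)
    (hFbd : ∀ i : ℕ, i ≤ L → ∃ C : ℝ, ∀ x, ‖iteratedFDeriv ℝ i F x‖ ≤ C) :
    ∀ x : Fin d → ℝ,
      |(∫ h : Fin d → ℝ, F (x - h) * χ h) - F x| ≤
        (1 / (Nat.factorial L : ℝ)) * (⨆ x : Fin d → ℝ, ‖iteratedFDeriv ℝ L F x‖) *
          ∫ h : Fin d → ℝ, ‖h‖ ^ L * |χ h| := by
  intro x
  -- the sup bound
  set M : ℝ := ⨆ y : Fin d → ℝ, ‖iteratedFDeriv ℝ L F y‖ with hMdef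
  obtain ⟨CL, hCL⟩ := hFbd L le_rfl
  have hbdd : BddAbove (Set.range fun y : Fin d → ℝ => ‖iteratedFDeriv ℝ L F y‖) := by
    refine ⟨CL, ?_⟩
    rintro _ ⟨y, rfl⟩
    exact hCL y
  have hM : ∀ y, ‖iteratedFDeriv ℝ L F y‖ ≤ M := fun y => le_ciSup hbdd y
  -- basic growth facts
  have hone : ∀ h : Fin d → ℝ, (1:ℝ) ≤ (1 + ‖h‖) ^ L :=
    fun h => one_le_pow₀ (by linarith [norm_nonneg h])
  have hpow : ∀ h : Fin d → ℝ, ‖h‖ ^ L ≤ (1 + ‖h‖) ^ L :=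
    fun h => pow_le_pow_left₀ (norm_nonneg h) (by linarith [norm_nonneg h]) L
  -- integrability facts
  have hχL1 : Integrable χ := by
    refine hχint.mono' hχm.aestronglyMeasurable (Filter.Eventually.of_forall fun h => ?_)
    rw [Real.norm_eq_abs]
    exact le_mul_of_one_le_left (abs_nonneg _) (hone h)
  have hIL : Integrable (fun h : Fin d → ℝ => ‖h‖ ^ L * |χ h|) := by
    refine hχint.mono' ?_ (Filter.Eventually.of_forall fun h => ?_)
    · exact (Continuous.aestronglyMeasurable (by continuity)).mul hχm.abs.aestronglyMeasurable
    · rw [Real.norm_eq_abs, abs_mul, abs_of_nonneg (by positivity : (0:ℝ) ≤ ‖h‖ ^ L), abs_abs]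
      exact mul_le_mul_of_nonneg_right (hpow h) (abs_nonneg _)
  obtain ⟨C0, hC0⟩ := hFbd 0 (Nat.zero_le L)
  have hFb : ∀ y, |F y| ≤ C0 := by
    intro y
    have := hC0 y
    rwa [norm_iteratedFDeriv_zero, Real.norm_eq_abs] at this
  have hIF : Integrable (fun h : Fin d → ℝ => F (x - h) * χ h) := by
    refine (hχL1.abs.const_mul C0).mono' ?_ (Filter.Eventually.of_forall fun h => ?_)
    · exact ((hF.continuous.comp (continuous_const.sub continuous_id)).aestronglyMeasurable).mul
        hχm.aestronglyMeasurable
    · rw [Real.norm_eq_abs, abs_mul]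
      exact mul_le_mul_of_nonneg_right (hFb _) (abs_nonneg _)
  -- the Taylor polynomial terms
  set T : (Fin d → ℝ) → ℝ := fun h => ∑ k ∈ Finset.range L,
    ((k.factorial : ℝ))⁻¹ * iteratedFDeriv ℝ k F x (fun _ => -h) with hTdef
  have hnormk : ∀ (k : ℕ), k ≤ L → ∀ h : Fin d → ℝ,
      |iteratedFDeriv ℝ k F x (fun _ => -h)| ≤ ‖iteratedFDeriv ℝ k F x‖ * (1 + ‖h‖) ^ L := by
    intro k hkL h
    calc |iteratedFDeriv ℝ k F x (fun _ => -h)|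
        ≤ ‖iteratedFDeriv ℝ k F x‖ * ∏ _j : Fin k, ‖-h‖ :=
          (iteratedFDeriv ℝ k F x).le_opNorm _
      _ = ‖iteratedFDeriv ℝ k F x‖ * ‖h‖ ^ k := by
          rw [Finset.prod_const, Finset.card_univ, Fintype.card_fin, norm_neg]
      _ ≤ ‖iteratedFDeriv ℝ k F x‖ * (1 + ‖h‖) ^ L := by
          gcongr
          calc ‖h‖ ^ k ≤ (1 + ‖h‖) ^ k :=
                pow_le_pow_left₀ (norm_nonneg h) (by linarith [norm_nonneg h]) k
            _ ≤ (1 + ‖h‖) ^ L := pow_le_pow_right₀ (by linarith [norm_nonneg h]) hkL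
  -- integrability of each term
  have hterm_int : ∀ k ∈ Finset.range L, Integrable (fun h : Fin d → ℝ =>
      ((k.factorial : ℝ))⁻¹ * (iteratedFDeriv ℝ k F x (fun _ => -h) * χ h)) := by
    intro k hk
    have hkL : k ≤ L := (Finset.mem_range.mp hk).le
    refine ((hχint.const_mul ‖iteratedFDeriv ℝ k F x‖).const_mul
      ((k.factorial : ℝ))⁻¹).mono' ?_ (Filter.Eventually.of_forall fun h => ?_)
    · have hc : Continuous (fun h : Fin d → ℝ => iteratedFDeriv ℝ k F x (fun _ => -h)) :=
        (iteratedFDeriv ℝ k F x).cont.comp (continuous_pi fun _ => continuous_id.neg)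
      exact (hc.aestronglyMeasurable.mul hχm.aestronglyMeasurable).const_mul _
    · rw [Real.norm_eq_abs, abs_mul, abs_mul]
      rw [abs_of_nonneg (by positivity : (0:ℝ) ≤ ((k.factorial : ℝ))⁻¹)]
      refine mul_le_mul_of_nonneg_left ?_ (by positivity)
      calc |iteratedFDeriv ℝ k F x (fun _ => -h)| * |χ h|
          ≤ (‖iteratedFDeriv ℝ k F x‖ * (1 + ‖h‖) ^ L) * |χ h| :=
            mul_le_mul_of_nonneg_right (hnormk k hkL h) (abs_nonneg _)
        _ = ‖iteratedFDeriv ℝ k F x‖ * ((1 + ‖h‖) ^ L * |χ h|) := by ring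
  have hTmul : (fun h : Fin d → ℝ => T h * χ h) = fun h => ∑ k ∈ Finset.range L,
      ((k.factorial : ℝ))⁻¹ * (iteratedFDeriv ℝ k F x (fun _ => -h) * χ h) := by
    funext h
    rw [hTdef, Finset.sum_mul]
    exact Finset.sum_congr rfl fun k _ => by ring
  have hIT : Integrable (fun h : Fin d → ℝ => T h * χ h) := by
    rw [hTmul]
    exact integrable_finset_sum _ hterm_int
  -- value of the polynomial integral
  have hTval : (∫ h : Fin d → ℝ, T h * χ h) = F x := by
    rw [hTmul, integral_finset_sum _ hterm_int]
    have hterm : ∀ k ∈ Finset.range L,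
        (∫ h : Fin d → ℝ, ((k.factorial : ℝ))⁻¹ *
          (iteratedFDeriv ℝ k F x (fun _ => -h) * χ h))
        = if k = 0 then F x else 0 := by
      intro k hk
      rw [integral_const_mul]
      rcases Nat.eq_zero_or_pos k with rfl | hkpos
      · rw [if_pos rfl]
        simp only [Nat.factorial_zero, Nat.cast_one, inv_one, one_mul]
        have : (fun h : Fin d → ℝ => iteratedFDeriv ℝ 0 F x (fun _ => -h) * χ h)
            = fun h => F x * χ h := by
          funext h
          rw [iteratedFDeriv_zero_apply]
        rw [this, integral_const_mul, hχ1, mul_one]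
      · rw [if_neg (Nat.pos_iff_ne_zero.mp hkpos),
          aux_moment_zero_moll χ hχm hχint hmom hkpos
            (Nat.le_sub_one_of_lt (Finset.mem_range.mp hk)) (iteratedFDeriv ℝ k F x), mul_zero]
    rw [Finset.sum_congr rfl hterm, Finset.sum_ite_eq' (Finset.range L) 0 fun _ => F x]
    rw [if_pos (Finset.mem_range.mpr hL)]
  -- pointwise Taylor bound
  have hptw : ∀ h : Fin d → ℝ, |F (x - h) - T h| ≤ M * ‖h‖ ^ L / (L.factorial : ℝ) := by
    intro h
    have := aux_taylor_moll hL hF hM x (-h)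
    rw [← sub_eq_add_neg] at this
    simpa [hTdef, norm_neg] using this
  -- combine
  have hsub : (∫ h : Fin d → ℝ, F (x - h) * χ h) - F x
      = ∫ h : Fin d → ℝ, (F (x - h) - T h) * χ h := by
    rw [← hTval, ← integral_sub hIF hIT]
    congr 1
    funext h
    ring
  rw [hsub]
  have habs : |∫ h : Fin d → ℝ, (F (x - h) - T h) * χ h|
      ≤ ∫ h : Fin d → ℝ, |F (x - h) - T h| * |χ h| := by
    have := norm_integral_le_integral_norm (μ := volume)
      (f := fun h : Fin d → ℝ => (F (x - h) - T h) * χ h)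
    simpa [Real.norm_eq_abs, abs_mul] using this
  refine habs.trans ?_
  have hmono : (∫ h : Fin d → ℝ, |F (x - h) - T h| * |χ h|)
      ≤ ∫ h : Fin d → ℝ, (M / (L.factorial : ℝ)) * (‖h‖ ^ L * |χ h|) := by
    refine integral_mono_of_nonneg
      (Filter.Eventually.of_forall fun h => mul_nonneg (abs_nonneg _) (abs_nonneg _))
      (hIL.const_mul _) (Filter.Eventually.of_forall fun h => ?_)
    calc |F (x - h) - T h| * |χ h| ≤ (M * ‖h‖ ^ L / (L.factorial : ℝ)) * |χ h| :=
          mul_le_mul_of_nonneg_right (hptw h) (abs_nonneg _)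
      _ = (M / (L.factorial : ℝ)) * (‖h‖ ^ L * |χ h|) := by ring
  refine hmono.trans ?_
  rw [integral_const_mul]
  apply le_of_eq
  ring
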